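/- Let a, b be integers with b - a \ge 2 and 1 < \alpha < 2. For each fixed s \in \{a+2, \ldots, b\}, the maximum of G(t,s) over t \in \{a+1, \ldots, b-1\} is attained at t = s - 1, i.e., \max_{t} G(t,s) = G(s-1, s). -/

import Mathlib

/-- Generalized rising function `x^{overline r} = Γ(x+r)/Γ(x)`; since `Real.Gamma`
vanishes at nonpositive integers and division by zero is zero in Lean, the convention
`x^{overline r} = 0` for nonpositive integer `x` holds automatically. -/
noncomputable def rising (x r : ℝ) : ℝ := Real.Gamma (x + r) / Real.Gamma x

/-- Green's function of the conjugate nabla fractional boundary value problem. -/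
noncomputable def G (a b : ℤ) (α : ℝ) (t s : ℤ) : ℝ :=
  if t ≤ s - 1 then
    (rising ((b : ℝ) - s + 1) (α - 1) / rising ((b : ℝ) - a) (α - 1))
      * rising ((t : ℝ) - a) (α - 1) / Real.Gamma α
  else
    ((rising ((b : ℝ) - s + 1) (α - 1) / rising ((b : ℝ) - a) (α - 1))
      * rising ((t : ℝ) - a) (α - 1) - rising ((t : ℝ) - s + 1) (α - 1)) / Real.Gamma α

/-- Auxiliary function `Q(x) = Γ(x+β)/Γ(x+1)`. -/
noncomputable def Qf (β x : ℝ) : ℝ := Real.Gamma (x + β) / Real.Gamma (x + 1)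

lemma rising_pos {β x : ℝ} (hβ : 0 < β) (hx : 0 < x) : 0 < rising x β :=
  div_pos (Real.Gamma_pos_of_pos (by linarith)) (Real.Gamma_pos_of_pos hx)

lemma Qf_pos {β x : ℝ} (hβ : 0 < β) (hx : 0 < x) : 0 < Qf β x :=
  div_pos (Real.Gamma_pos_of_pos (by linarith)) (Real.Gamma_pos_of_pos (by linarith))

lemma rising_step {β x : ℝ} (hβ : 0 < β) (hx : 0 < x) :
    rising (x + 1) β = rising x β + β * Qf β x := by
  unfold rising Qf
  rw [show x + 1 + β = (x + β) + 1 by ring,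
    Real.Gamma_add_one (by positivity : x + β ≠ 0),
    Real.Gamma_add_one hx.ne']
  have hg : Real.Gamma x ≠ 0 := (Real.Gamma_pos_of_pos hx).ne'
  field_simp

lemma Qf_step {β x : ℝ} (hβ : 0 < β) (hβ1 : β ≤ 1) (hx : 0 < x) :
    Qf β (x + 1) ≤ Qf β x := by
  unfold Qf
  rw [show x + 1 + β = (x + β) + 1 by ring,
    show x + 1 + 1 = (x + 1) + 1 by ring,
    Real.Gamma_add_one (by positivity : x + β ≠ 0),
    Real.Gamma_add_one (by positivity : x + 1 ≠ 0)]
  have h1 : 0 < Real.Gamma (x + β) := Real.Gamma_pos_of_pos (by linarith)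
  have h2 : 0 < Real.Gamma (x + 1) := Real.Gamma_pos_of_pos (by linarith)
  rw [div_le_div_iff₀ (by positivity) h2]
  nlinarith [mul_pos h1 h2]

lemma rising_mono {β : ℝ} (hβ : 0 < β) {m n : ℤ} (hm : 1 ≤ m) (hmn : m ≤ n) :
    rising (m : ℝ) β ≤ rising (n : ℝ) β := by
  refine Int.le_induction (motive := fun k _ => rising (m : ℝ) β ≤ rising (k : ℝ) β) ?_ ?_ n hmn
  · exact le_rfl
  · intro n hn ih
    have hn0 : (0 : ℝ) < (n : ℝ) := by
      exact_mod_cast lt_of_lt_of_le zero_lt_one (hm.trans hn)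
    have hq := Qf_pos (β := β) hβ hn0
    push_cast
    rw [rising_step hβ hn0]
    nlinarith [ih]

lemma Qf_anti {β : ℝ} (hβ : 0 < β) (hβ1 : β ≤ 1) {m n : ℤ} (hm : 1 ≤ m) (hmn : m ≤ n) :
    Qf β (n : ℝ) ≤ Qf β (m : ℝ) := by
  refine Int.le_induction (motive := fun k _ => Qf β (k : ℝ) ≤ Qf β (m : ℝ)) ?_ ?_ n hmn
  · exact le_rfl
  · intro n hn ih
    have hn0 : (0 : ℝ) < (n : ℝ) := by
      exact_mod_cast lt_of_lt_of_le zero_lt_one (hm.trans hn)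
    push_cast
    exact (Qf_step hβ hβ1 hn0).trans ih

lemma C_le_one {β : ℝ} (hβ : 0 < β) (a b s : ℤ) (hs1 : a + 2 ≤ s) (hs2 : s ≤ b) :
    rising ((b : ℝ) - s + 1) β / rising ((b : ℝ) - a) β ≤ 1 := by
  have h1 : (1 : ℤ) ≤ b - s + 1 := by omega
  have h2 : b - s + 1 ≤ b - a := by omega
  have hmono := rising_mono hβ h1 h2
  have hba : (0 : ℝ) < (b : ℝ) - a := by
    exact_mod_cast (show (0:ℤ) < b - a by omega)
  have hpos := rising_pos (β := β) hβ hba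
  rw [div_le_one hpos]
  have e1 : ((b - s + 1 : ℤ) : ℝ) = (b : ℝ) - s + 1 := by push_cast; ring
  have e2 : ((b - a : ℤ) : ℝ) = (b : ℝ) - a := by push_cast; ring
  rwa [e1, e2] at hmono

lemma C_nonneg {β : ℝ} (hβ : 0 < β) (a b s : ℤ) (hs1 : a + 2 ≤ s) (hs2 : s ≤ b) :
    0 ≤ rising ((b : ℝ) - s + 1) β / rising ((b : ℝ) - a) β := by
  have h1 : (0 : ℝ) < (b : ℝ) - s + 1 := by
    exact_mod_cast (show (0:ℤ) < b - s + 1 by omega)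
  have h2 : (0 : ℝ) < (b : ℝ) - a := by
    exact_mod_cast (show (0:ℤ) < b - a by omega)
  exact le_of_lt (div_pos (rising_pos hβ h1) (rising_pos hβ h2))

lemma key (a b s : ℤ) (hs1 : a + 2 ≤ s) (hs2 : s ≤ b) {β : ℝ} (hβ : 0 < β) (hβ1 : β ≤ 1)
    {t : ℤ} (ht : s ≤ t) :
    (rising ((b : ℝ) - s + 1) β / rising ((b : ℝ) - a) β) *
      (rising ((t : ℝ) - a) β - rising ((s : ℝ) - 1 - a) β) ≤ rising ((t : ℝ) - s + 1) β := by
  set C := rising ((b : ℝ) - s + 1) β / rising ((b : ℝ) - a) β with hC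
  have hC1 : C ≤ 1 := C_le_one hβ a b s hs1 hs2
  have hC0 : 0 ≤ C := C_nonneg hβ a b s hs1 hs2
  have hd0 : (0 : ℝ) < (s : ℝ) - 1 - a := by
    exact_mod_cast (show (0:ℤ) < s - 1 - a by omega)
  refine Int.le_induction (motive := fun u _ => C * (rising ((u : ℝ) - a) β - rising ((s : ℝ) - 1 - a) β) ≤ rising ((u : ℝ) - s + 1) β) ?_ ?_ t ht
  · show C * (rising ((s : ℝ) - a) β - rising ((s : ℝ) - 1 - a) β) ≤ rising ((s : ℝ) - s + 1) β
    have hstep : rising ((s : ℝ) - a) β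
        = rising ((s : ℝ) - 1 - a) β + β * Qf β ((s : ℝ) - 1 - a) := by
      have := rising_step (β := β) hβ hd0
      rw [show (s : ℝ) - 1 - a + 1 = (s : ℝ) - a by ring] at this
      exact this
    have hQle : Qf β ((s : ℝ) - 1 - a) ≤ Qf β ((1 : ℤ) : ℝ) := by
      have := Qf_anti hβ hβ1 (le_refl (1:ℤ)) (show (1:ℤ) ≤ s - 1 - a by omega)
      have hcast : ((s - 1 - a : ℤ) : ℝ) = (s : ℝ) - 1 - a := by push_cast; ring
      rwa [hcast] at this
    have hQ1 : Qf β ((1 : ℤ) : ℝ) = rising ((s : ℝ) - s + 1) β := by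
      unfold Qf rising
      rw [show ((1 : ℤ) : ℝ) = (1:ℝ) by norm_num,
        show (s : ℝ) - s + 1 = (1:ℝ) by ring,
        show (1:ℝ) + 1 = (2:ℝ) by norm_num, Real.Gamma_two, Real.Gamma_one]
    have hQpos : 0 < Qf β ((s : ℝ) - 1 - a) := Qf_pos hβ hd0
    rw [hstep]
    have expand : C * (rising ((s : ℝ) - 1 - a) β + β * Qf β ((s : ℝ) - 1 - a)
        - rising ((s : ℝ) - 1 - a) β) = (C * β) * Qf β ((s : ℝ) - 1 - a) := by ring
    rw [expand, ← hQ1]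
    have hCβ : C * β ≤ 1 := by nlinarith
    calc (C * β) * Qf β ((s : ℝ) - 1 - a) ≤ 1 * Qf β ((s : ℝ) - 1 - a) :=
          mul_le_mul_of_nonneg_right hCβ hQpos.le
      _ = Qf β ((s : ℝ) - 1 - a) := one_mul _
      _ ≤ Qf β ((1 : ℤ) : ℝ) := hQle
  · intro t ht' ih
    show C * (rising (((t + 1 : ℤ) : ℝ) - a) β - rising ((s : ℝ) - 1 - a) β)
        ≤ rising (((t + 1 : ℤ) : ℝ) - s + 1) β
    have hta : (0 : ℝ) < (t : ℝ) - a := by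
      exact_mod_cast (show (0:ℤ) < t - a by omega)
    have hts : (0 : ℝ) < (t : ℝ) - s + 1 := by
      exact_mod_cast (show (0:ℤ) < t - s + 1 by omega)
    have hstep1 : rising (((t + 1 : ℤ) : ℝ) - a) β
        = rising ((t : ℝ) - a) β + β * Qf β ((t : ℝ) - a) := by
      have := rising_step (β := β) hβ hta
      rw [show (t : ℝ) - a + 1 = ((t + 1 : ℤ) : ℝ) - a by push_cast; ring] at this
      exact this
    have hstep2 : rising (((t + 1 : ℤ) : ℝ) - s + 1) β
        = rising ((t : ℝ) - s + 1) β + β * Qf β ((t : ℝ) - s + 1) := by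
      have := rising_step (β := β) hβ hts
      rw [show (t : ℝ) - s + 1 + 1 = ((t + 1 : ℤ) : ℝ) - s + 1 by push_cast; ring] at this
      exact this
    have hQ : Qf β ((t : ℝ) - a) ≤ Qf β ((t : ℝ) - s + 1) := by
      have := Qf_anti hβ hβ1 (show (1:ℤ) ≤ t - s + 1 by omega)
        (show t - s + 1 ≤ t - a by omega)
      have e1 : ((t - a : ℤ) : ℝ) = (t : ℝ) - a := by push_cast; ring
      have e2 : ((t - s + 1 : ℤ) : ℝ) = (t : ℝ) - s + 1 := by push_cast; ring
      rwa [e1, e2] at this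
    have hQpos : 0 < Qf β ((t : ℝ) - a) := Qf_pos hβ hta
    have ih' := ih
    rw [hstep1, hstep2]
    have e1 : 0 ≤ (1 - C) * (β * Qf β ((t : ℝ) - a)) :=
      mul_nonneg (by linarith) (by positivity)
    have e2 : β * Qf β ((t : ℝ) - a) ≤ β * Qf β ((t : ℝ) - s + 1) :=
      mul_le_mul_of_nonneg_left hQ hβ.le
    nlinarith [ih', e1, e2]

theorem G_max_at_diag (a b : ℤ) (hab : a + 2 ≤ b) (α : ℝ)
    (hα1 : 1 < α) (hα2 : α < 2) (s : ℤ) (hs1 : a + 2 ≤ s) (hs2 : s ≤ b) :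
    IsGreatest ((fun t : ℤ => G a b α t s) '' {t : ℤ | a + 1 ≤ t ∧ t ≤ b - 1})
      (G a b α (s - 1) s) := by
  have hβ : (0:ℝ) < α - 1 := by linarith
  have hβ1 : α - 1 ≤ 1 := by linarith
  have hΓα : 0 < Real.Gamma α := Real.Gamma_pos_of_pos (by linarith)
  have hC0 : 0 ≤ rising ((b : ℝ) - s + 1) (α - 1) / rising ((b : ℝ) - a) (α - 1) :=
    C_nonneg hβ a b s hs1 hs2
  constructor
  · exact ⟨s - 1, ⟨by omega, by omega⟩, rfl⟩
  · rintro y ⟨t, ⟨ht1, ht2⟩, rfl⟩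
    simp only
    have hGd : G a b α (s - 1) s
        = rising ((b : ℝ) - s + 1) (α - 1) / rising ((b : ℝ) - a) (α - 1)
          * rising ((s : ℝ) - 1 - a) (α - 1) / Real.Gamma α := by
      unfold G
      rw [if_pos (le_refl (s - 1))]
      push_cast
      ring_nf
    rw [hGd]
    by_cases hts : t ≤ s - 1
    · unfold G
      rw [if_pos hts]
      apply div_le_div_of_nonneg_right ?_ hΓα.le
      apply mul_le_mul_of_nonneg_left ?_ hC0
      have h1 : (1 : ℤ) ≤ t - a := by omega
      have h2 : t - a ≤ s - 1 - a := by omega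
      have hmono := rising_mono hβ h1 h2
      have e1 : ((t - a : ℤ) : ℝ) = (t : ℝ) - a := by push_cast; ring
      have e2 : ((s - 1 - a : ℤ) : ℝ) = (s : ℝ) - 1 - a := by push_cast; ring
      rwa [e1, e2] at hmono
    · unfold G
      rw [if_neg hts]
      apply div_le_div_of_nonneg_right ?_ hΓα.le
      have hkey := key a b s hs1 hs2 hβ hβ1 (show s ≤ t by omega)
      linarith
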